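/- For every high-multiplicity scheduling instance on identical machines there exists a schedule x* that maximizes Cmin (i.e., Cmin(x) ≤ Cmin(x*) for every schedule x) and has gap size at most pmax, i.e., x* i₁ j ≤ x* i₂ j + pmax for all machines i₁, i₂ and all job types j. -/
import Mathlib


/-- A schedule assigns `x i j` jobs of type `j` to machine `i`, placing all `n j` jobs. -/
def IsSchedule {m d : ℕ} (n : Fin d → ℕ) (x : Fin m → Fin d → ℕ) : Prop :=
  ∀ j, ∑ i, x i j = n j

/-- The load of machine `i` under schedule `x`. -/
def load {m d : ℕ} (p : Fin d → ℕ) (x : Fin m → Fin d → ℕ) (i : Fin m) : ℕ :=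
  ∑ j, x i j * p j

/-- The makespan: the maximum machine load. -/
def Cmax {m d : ℕ} (p : Fin d → ℕ) (x : Fin m → Fin d → ℕ) : ℕ :=
  Finset.univ.sup (load p x)

/-- The minimum machine load. -/
noncomputable def Cmin {m d : ℕ} (p : Fin d → ℕ) (x : Fin m → Fin d → ℕ) : ℕ :=
  sInf (Set.range (load p x))

/-- The envy value: maximum load minus minimum load. -/
noncomputable def Cenvy {m d : ℕ} (p : Fin d → ℕ) (x : Fin m → Fin d → ℕ) : ℕ :=
  Cmax p x - Cmin p x

open Finset

namespace CGaux

variable {d : ℕ}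

lemma sum_split {m : ℕ} (f : Fin m → ℕ) {i₁ i₂ : Fin m} (h : i₁ ≠ i₂) :
    ∑ i, f i = f i₁ + f i₂ + ∑ i ∈ (univ.erase i₁).erase i₂, f i := by
  rw [← Finset.add_sum_erase _ f (Finset.mem_univ i₁),
      ← Finset.add_sum_erase _ f (Finset.mem_erase.mpr ⟨h.symm, Finset.mem_univ i₂⟩),
      add_assoc]

noncomputable def gstep (nv g : Fin d → ℕ) : Fin d → ℕ :=
  if h : ∃ k, g k < nv k then fun k => g k + (if k = Classical.choose h then 1 else 0) else g

noncomputable def greedy (nv : Fin d → ℕ) : ℕ → Fin d → ℕ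
  | 0 => fun _ => 0
  | r + 1 => gstep nv (greedy nv r)

lemma gstep_exists {nv g : Fin d → ℕ} (hg : ∀ k, g k ≤ nv k) (h : ∑ k, g k < ∑ k, nv k) :
    ∃ k, g k < nv k := by
  by_contra hc
  push_neg at hc
  have : ∑ k, nv k ≤ ∑ k, g k := Finset.sum_le_sum fun k _ => hc k
  omega

lemma gstep_spec {nv g : Fin d → ℕ} (h : ∃ k, g k < nv k) :
    ∃ c, g c < nv c ∧ gstep nv g = fun k => g k + (if k = c then 1 else 0) :=
  ⟨Classical.choose h, Classical.choose_spec h, by unfold gstep; rw [dif_pos h]⟩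

lemma greedy_le (nv : Fin d → ℕ) : ∀ r k, greedy nv r k ≤ nv k := by
  intro r
  induction r with
  | zero => intro k; simp [greedy]
  | succ r ih =>
    intro k
    show gstep nv (greedy nv r) k ≤ nv k
    by_cases hex : ∃ k, greedy nv r k < nv k
    · obtain ⟨c, hc1, hc2⟩ := gstep_spec hex
      simp only [hc2]
      by_cases hk : k = c
      · subst hk
        simpa using Nat.succ_le_of_lt hc1
      · simp only [if_neg hk]; have := ih k; omega
    · unfold gstep
      rw [dif_neg hex]
      exact ih k

lemma greedy_sum (nv : Fin d → ℕ) : ∀ r, r ≤ ∑ k, nv k → ∑ k, greedy nv r k = r := by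
  intro r
  induction r with
  | zero => intro _; simp [greedy]
  | succ r ih =>
    intro h
    have ihr := ih (by omega)
    have hex : ∃ k, greedy nv r k < nv k := gstep_exists (greedy_le nv r) (by omega)
    obtain ⟨c, _, hc⟩ := gstep_spec hex
    show ∑ k, gstep nv (greedy nv r) k = r + 1
    rw [hc, Finset.sum_add_distrib, ihr]
    simp

lemma greedy_pair (nv p : Fin d → ℕ) (pmax : ℕ) (hp : ∀ k, 1 ≤ p k) (hpm : ∀ k, p k ≤ pmax)
    (a : ℕ) : ∀ b, a ≤ b → b ≤ ∑ k, nv k →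
    (∀ k, greedy nv a k ≤ greedy nv b k) ∧
    (∑ k, greedy nv a k * p k) + (b - a) ≤ ∑ k, greedy nv b k * p k ∧
    ∑ k, greedy nv b k * p k ≤ (∑ k, greedy nv a k * p k) + (b - a) * pmax := by
  intro b
  induction b with
  | zero =>
    intro hab _
    have : a = 0 := by omega
    subst this
    simp
  | succ b ih =>
    intro hab hbN
    rcases Nat.lt_or_ge a (b + 1) with h | h
    swap
    · have : a = b + 1 := by omega
      subst this
      simp
    have hab' : a ≤ b := by omega
    obtain ⟨h1, h2, h3⟩ := ih hab' (by omega)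
    have hex : ∃ k, greedy nv b k < nv k :=
      gstep_exists (greedy_le nv b) (by rw [greedy_sum nv b (by omega)]; omega)
    obtain ⟨c, hcle, hc⟩ := gstep_spec hex
    have hstep : ∀ k, greedy nv (b+1) k = greedy nv b k + (if k = c then 1 else 0) := by
      intro k
      show gstep nv (greedy nv b) k = _
      rw [hc]
    have hload : ∑ k, greedy nv (b+1) k * p k = (∑ k, greedy nv b k * p k) + p c := by
      calc ∑ k, greedy nv (b+1) k * p k
          = ∑ k, (greedy nv b k * p k + (if k = c then p k else 0)) := by
            refine Finset.sum_congr rfl fun k _ => ?_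
            rw [hstep k, add_mul]
            by_cases hk : k = c <;> simp [hk]
        _ = (∑ k, greedy nv b k * p k) + p c := by
            rw [Finset.sum_add_distrib, Finset.sum_ite_eq' univ c p]
            simp
    refine ⟨fun k => ?_, ?_, ?_⟩
    · rw [hstep k]; have := h1 k; omega
    · have := hp c
      have hba : b + 1 - a = (b - a) + 1 := by omega
      rw [hload, hba]; omega
    · have := hpm c
      have hba : (b + 1 - a) * pmax = (b - a) * pmax + pmax := by
        rw [show b + 1 - a = (b - a) + 1 from by omega, add_mul, one_mul]
      rw [hload, hba]; omega

lemma exchange (p nv : Fin d → ℕ) (pmax P : ℕ) (hp : ∀ k, 1 ≤ p k)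
    (hpm : ∀ k, p k ≤ pmax) (hP : 1 ≤ P)
    (hsum : pmax * P + 1 ≤ ∑ k, nv k * p k) :
    ∃ t : Fin d → ℕ, ∃ q : ℕ, (∀ k, t k ≤ nv k) ∧ 1 ≤ q ∧ q ≤ pmax ∧
      ∑ k, t k * p k = q * P := by
  have hNp : ∑ k, nv k * p k ≤ (∑ k, nv k) * pmax := by
    rw [Finset.sum_mul]
    exact Finset.sum_le_sum fun k _ => Nat.mul_le_mul_left _ (hpm k)
  have hPN : P < ∑ k, nv k := by
    by_contra h
    push_neg at h
    have h1 : (∑ k, nv k) * pmax ≤ P * pmax := Nat.mul_le_mul_right _ h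
    have h2 : P * pmax = pmax * P := mul_comm _ _
    omega
  -- pigeonhole on residues of prefix load sums
  obtain ⟨a, ha, b, hb, hne, heq⟩ :=
    Finset.exists_ne_map_eq_of_card_lt_of_maps_to
      (s := Finset.range (P+1)) (t := Finset.range P)
      (by simp)
      (f := fun r => (∑ k, greedy nv r k * p k) % P)
      (fun r _ => Finset.mem_range.mpr (Nat.mod_lt _ hP))
  rw [Finset.mem_range] at ha hb
  have main : ∀ a b : ℕ, a < b → b ≤ P →
      (∑ k, greedy nv a k * p k) % P = (∑ k, greedy nv b k * p k) % P →
      ∃ t : Fin d → ℕ, ∃ q : ℕ, (∀ k, t k ≤ nv k) ∧ 1 ≤ q ∧ q ≤ pmax ∧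
        ∑ k, t k * p k = q * P := by
    intro a b hab hbP hmod
    have hbN : b ≤ ∑ k, nv k := by omega
    obtain ⟨h1, h2, h3⟩ := greedy_pair nv p pmax hp hpm a b (le_of_lt hab) hbN
    have hle : (∑ k, greedy nv a k * p k) ≤ ∑ k, greedy nv b k * p k := by omega
    have hdvd : P ∣ (∑ k, greedy nv b k * p k) - ∑ k, greedy nv a k * p k :=
      (Nat.modEq_iff_dvd' hle).mp hmod
    obtain ⟨q, hq⟩ := hdvd
    have htsum : (∑ k, (greedy nv b k - greedy nv a k) * p k) + ∑ k, greedy nv a k * p k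
        = ∑ k, greedy nv b k * p k := by
      rw [← Finset.sum_add_distrib]
      refine Finset.sum_congr rfl fun k _ => ?_
      rw [← add_mul, Nat.sub_add_cancel (h1 k)]
    refine ⟨fun k => greedy nv b k - greedy nv a k, q,
      fun k => le_trans (Nat.sub_le _ _) (greedy_le nv b k), ?_, ?_, ?_⟩
    · rcases Nat.eq_zero_or_pos q with h0 | h0
      · subst h0
        simp at hq
        omega
      · exact h0
    · have h4 : (b - a) * pmax ≤ P * pmax := Nat.mul_le_mul_right _ (by omega)
      have h5 : P * q ≤ P * pmax := by
        calc P * q = (∑ k, greedy nv b k * p k) - ∑ k, greedy nv a k * p k := hq.symm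
          _ ≤ (b - a) * pmax := by omega
          _ ≤ P * pmax := h4
      exact Nat.le_of_mul_le_mul_left h5 (by omega)
    · show (∑ k, (greedy nv b k - greedy nv a k) * p k) = q * P
      rw [mul_comm q P]
      omega
  rcases Nat.lt_or_ge a b with h | h
  · exact main a b h (by omega) heq
  · exact main b a (by omega) (by omega) heq.symm


section Move

variable {m : ℕ}

def Phi (p : Fin d → ℕ) (x : Fin m → Fin d → ℕ) : ℕ := ∑ i, (load p x i) ^ 2

def Psi (x : Fin m → Fin d → ℕ) : ℕ := ∑ i, ∑ k, (x i k) ^ 2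

def moveFn (x : Fin m → Fin d → ℕ) (i₁ i₂ : Fin m) (a b : Fin d → ℕ) :
    Fin m → Fin d → ℕ :=
  fun i k => if i = i₁ then x i₁ k - a k + b k
    else if i = i₂ then x i₂ k + a k - b k else x i k

variable {x : Fin m → Fin d → ℕ} {i₁ i₂ : Fin m} {a b : Fin d → ℕ}

lemma moveFn_apply₁ (k : Fin d) : moveFn x i₁ i₂ a b i₁ k = x i₁ k - a k + b k := by
  simp [moveFn]

lemma moveFn_apply₂ (h : i₁ ≠ i₂) (k : Fin d) :
    moveFn x i₁ i₂ a b i₂ k = x i₂ k + a k - b k := by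
  simp [moveFn, h.symm]

lemma moveFn_apply_other {i : Fin m} (h1 : i ≠ i₁) (h2 : i ≠ i₂) :
    moveFn x i₁ i₂ a b i = x i := by
  funext k; simp [moveFn, h1, h2]

lemma moveFn_isSchedule {n : Fin d → ℕ} (h : i₁ ≠ i₂) (ha : ∀ k, a k ≤ x i₁ k)
    (hb : ∀ k, b k ≤ x i₂ k) (hx : IsSchedule n x) :
    IsSchedule n (moveFn x i₁ i₂ a b) := by
  intro k
  have h1 := hx k
  rw [sum_split (fun i => x i k) h] at h1
  rw [sum_split (fun i => moveFn x i₁ i₂ a b i k) h]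
  have e : ∑ i ∈ (univ.erase i₁).erase i₂, moveFn x i₁ i₂ a b i k
      = ∑ i ∈ (univ.erase i₁).erase i₂, x i k := by
    refine Finset.sum_congr rfl fun i hi => ?_
    have hi2 := Finset.mem_erase.mp hi
    have hi1 := Finset.mem_erase.mp hi2.2
    rw [moveFn_apply_other hi1.1 hi2.1]
  simp only [moveFn_apply₁, moveFn_apply₂ h, e] at *
  have := ha k; have := hb k
  omega

lemma moveFn_load₁ (p : Fin d → ℕ) (ha : ∀ k, a k ≤ x i₁ k) :
    load p (moveFn x i₁ i₂ a b) i₁ + ∑ k, a k * p k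
      = load p x i₁ + ∑ k, b k * p k := by
  unfold load
  rw [← Finset.sum_add_distrib, ← Finset.sum_add_distrib]
  refine Finset.sum_congr rfl fun k _ => ?_
  rw [moveFn_apply₁, ← add_mul, ← add_mul]
  congr 1
  have := ha k
  omega

lemma moveFn_load₂ (p : Fin d → ℕ) (h : i₁ ≠ i₂) (hb : ∀ k, b k ≤ x i₂ k) :
    load p (moveFn x i₁ i₂ a b) i₂ + ∑ k, b k * p k
      = load p x i₂ + ∑ k, a k * p k := by
  unfold load
  rw [← Finset.sum_add_distrib, ← Finset.sum_add_distrib]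
  refine Finset.sum_congr rfl fun k _ => ?_
  rw [moveFn_apply₂ h, ← add_mul, ← add_mul]
  congr 1
  have := hb k
  omega

lemma moveFn_load_other (p : Fin d → ℕ) {i : Fin m} (h1 : i ≠ i₁) (h2 : i ≠ i₂) :
    load p (moveFn x i₁ i₂ a b) i = load p x i := by
  unfold load
  rw [moveFn_apply_other h1 h2]

lemma arithA {L1 L2 P u v : ℕ} (e1 : u + P = L1) (e2 : v = L2 + P) (h : L2 + P ≤ L1) :
    u ^ 2 + v ^ 2 ≤ L1 ^ 2 + L2 ^ 2 := by
  subst e2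
  subst e1
  have h2 : L2 ≤ u := by omega
  nlinarith [Nat.mul_le_mul_right P h2]

lemma arithB {z y : ℕ} (q : ℕ) (hq : 1 ≤ q) (h : y + q < z) :
    (z - q) ^ 2 + (y + q) ^ 2 < z ^ 2 + y ^ 2 := by
  obtain ⟨c, rfl⟩ : ∃ c, z = c + q := ⟨z - q, by omega⟩
  rw [Nat.add_sub_cancel]
  have hyc : y < c := by omega
  nlinarith

lemma arithC {z y t : ℕ} (h : t ≤ y - z) : (z + t) ^ 2 + (y - t) ^ 2 ≤ z ^ 2 + y ^ 2 := by
  rcases Nat.eq_zero_or_pos t with rfl | ht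
  · simp
  · have h1 : z + t ≤ y := by omega
    obtain ⟨w, rfl⟩ : ∃ w, y = w + t := ⟨y - t, by omega⟩
    rw [Nat.add_sub_cancel]
    have hzw : z ≤ w := by omega
    nlinarith

end Move

end CGaux

open CGaux

theorem exists_Cmin_maximizer_small_gap (d m : ℕ) (hd : 1 ≤ d) (hm : 1 ≤ m)
    (p : Fin d → ℕ) (hp : ∀ j, 1 ≤ p j) (n : Fin d → ℕ) :
    ∃ xstar : Fin m → Fin d → ℕ, IsSchedule n xstar ∧
      (∀ x : Fin m → Fin d → ℕ, IsSchedule n x → Cmin p x ≤ Cmin p xstar) ∧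
      ∀ (i₁ i₂ : Fin m) (j : Fin d), xstar i₁ j ≤ xstar i₂ j + Finset.univ.sup p := by
  classical
  set pmax := (Finset.univ : Finset (Fin d)).sup p with hpmdef
  have hppm : ∀ k, p k ≤ pmax := fun k => Finset.le_sup (Finset.mem_univ k)
  -- a schedule exists
  have hx0 : IsSchedule n (fun i k => if i = (⟨0, hm⟩ : Fin m) then n k else 0) := by
    intro k
    rw [Finset.sum_ite_eq' Finset.univ (⟨0, hm⟩ : Fin m) (fun _ => n k)]
    simp
  -- Cmin is bounded
  have hCb : ∀ x : Fin m → Fin d → ℕ, IsSchedule n x → Cmin p x ≤ ∑ k, n k * p k := by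
    intro x hx
    have h1 : Cmin p x ≤ load p x ⟨0, hm⟩ := Nat.sInf_le ⟨_, rfl⟩
    have h2 : load p x ⟨0, hm⟩ ≤ ∑ i, load p x i :=
      Finset.single_le_sum (fun i _ => Nat.zero_le _) (Finset.mem_univ _)
    have h3 : ∑ i, load p x i = ∑ k, n k * p k := by
      unfold load
      rw [Finset.sum_comm]
      exact Finset.sum_congr rfl fun k _ => by rw [← Finset.sum_mul, hx k]
    omega
  -- level 1 : maximize Cmin
  have hScne : ((fun x => Cmin p x) '' {x | IsSchedule n x}).Nonempty := ⟨_, _, hx0, rfl⟩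
  have hbdd : BddAbove ((fun x => Cmin p x) '' {x | IsSchedule n x}) :=
    ⟨∑ k, n k * p k, by rintro c ⟨x, hx, rfl⟩; exact hCb x hx⟩
  set C := sSup ((fun x => Cmin p x) '' {x | IsSchedule n x}) with hCdef
  obtain ⟨x₁, hx₁, hx₁C⟩ := Nat.sSup_mem hScne hbdd
  have hCub : ∀ x : Fin m → Fin d → ℕ, IsSchedule n x → Cmin p x ≤ C :=
    fun x hx => le_csSup hbdd ⟨x, hx, rfl⟩
  -- level 2 : minimize Phi
  have hA1ne : ((fun x => Phi p x) '' {x | IsSchedule n x ∧ Cmin p x = C}).Nonempty :=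
    ⟨_, x₁, ⟨hx₁, hx₁C⟩, rfl⟩
  set Φs := sInf ((fun x => Phi p x) '' {x | IsSchedule n x ∧ Cmin p x = C}) with hΦdef
  obtain ⟨x₂, hx₂, hx₂Φ⟩ := Nat.sInf_mem hA1ne
  have hΦlb : ∀ x : Fin m → Fin d → ℕ, IsSchedule n x → Cmin p x = C → Φs ≤ Phi p x :=
    fun x h1 h2 => Nat.sInf_le ⟨x, ⟨h1, h2⟩, rfl⟩
  -- level 3 : minimize Psi
  have hA2ne : ((fun x => Psi x) ''
      {x : Fin m → Fin d → ℕ | IsSchedule n x ∧ Cmin p x = C ∧ Phi p x = Φs}).Nonempty :=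
    ⟨_, x₂, ⟨hx₂.1, hx₂.2, hx₂Φ⟩, rfl⟩
  obtain ⟨xstar, ⟨hs, hsC, hsΦ⟩, hsΨ⟩ := Nat.sInf_mem hA2ne
  have hΨlb : ∀ x : Fin m → Fin d → ℕ, IsSchedule n x → Cmin p x = C → Phi p x = Φs →
      sInf ((fun x => Psi x) ''
        {x : Fin m → Fin d → ℕ | IsSchedule n x ∧ Cmin p x = C ∧ Phi p x = Φs}) ≤ Psi x :=
    fun x h1 h2 h3 => Nat.sInf_le ⟨x, ⟨h1, h2, h3⟩, rfl⟩
  refine ⟨xstar, hs, fun x hx => le_trans (hCub x hx) (le_of_eq hsC.symm), ?_⟩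
  -- the key contradiction principle
  have hCle : ∀ i, C ≤ load p xstar i := by
    intro i
    rw [← hsC]
    exact Nat.sInf_le ⟨i, rfl⟩
  have key : ∀ x' : Fin m → Fin d → ℕ, IsSchedule n x' → (∀ i, C ≤ load p x' i) →
      Phi p x' ≤ Phi p xstar → Psi x' < Psi xstar → False := by
    intro x' h1 h2 h3 h4
    have hC' : Cmin p x' = C := by
      refine le_antisymm (hCub x' h1) (le_csInf ⟨load p x' ⟨0, hm⟩, ⟨0, hm⟩, rfl⟩ ?_)
      rintro b ⟨i, rfl⟩
      exact h2 i
    have h5 : Φs ≤ Phi p x' := hΦlb x' h1 hC'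
    have h6 : Phi p x' = Φs := le_antisymm (le_trans h3 (le_of_eq hsΦ)) h5
    have h7 := hΨlb x' h1 hC' h6
    have h8 : Psi xstar ≤ Psi x' := by
      have h9 : Psi xstar = _ := hsΨ
      rw [h9]; exact h7
    omega
  intro i₁ i₂ j
  by_contra hcon
  push_neg at hcon
  have hne12 : i₁ ≠ i₂ := by rintro rfl; omega
  have hpj1 : 1 ≤ p j := hp j
  have hpjm : p j ≤ pmax := hppm j
  have hpmax1 : 1 ≤ pmax := le_trans hpj1 hpjm
  rcases le_or_gt (load p xstar i₂ + p j) (load p xstar i₁) with hA | hB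
  · -- Case A: move one type-j job from i₁ to i₂
    set a : Fin d → ℕ := fun k => if k = j then 1 else 0 with hadef
    set b : Fin d → ℕ := fun _ => 0 with hbdef
    have ha : ∀ k, a k ≤ xstar i₁ k := by
      intro k
      by_cases hk : k = j
      · simp only [hadef, hk, if_pos rfl]; omega
      · simp only [hadef, if_neg hk]; omega
    have hb : ∀ k, b k ≤ xstar i₂ k := fun k => Nat.zero_le _
    have hap : ∑ k, a k * p k = p j := by
      have h0 : ∀ k, a k * p k = if k = j then p k else 0 := by
        intro k; by_cases hk : k = j <;> simp [hadef, hk]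
      rw [Finset.sum_congr rfl fun k _ => h0 k, Finset.sum_ite_eq' Finset.univ j p]
      simp
    have hbp : ∑ k, b k * p k = 0 := by simp [hbdef]
    have hsch' := moveFn_isSchedule hne12 ha hb hs
    have he1 := moveFn_load₁ (i₂ := i₂) (b := b) p ha
    have he2 := moveFn_load₂ (a := a) p hne12 hb
    rw [hap, hbp] at he1 he2
    rw [Nat.add_zero] at he1 he2
    -- he1 : load p x' i₁ + p j = load p xstar i₁
    -- he2 : load p x' i₂ = load p xstar i₂ + p j
    have hv1 : moveFn xstar i₁ i₂ a b i₁ j = xstar i₁ j - 1 := by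
      rw [moveFn_apply₁]; simp [hadef, hbdef]
    have hv2 : moveFn xstar i₁ i₂ a b i₂ j = xstar i₂ j + 1 := by
      rw [moveFn_apply₂ hne12]; simp [hadef, hbdef]
    have hvo : ∀ k, k ≠ j → moveFn xstar i₁ i₂ a b i₁ k = xstar i₁ k
        ∧ moveFn xstar i₁ i₂ a b i₂ k = xstar i₂ k := by
      intro k hk
      constructor
      · rw [moveFn_apply₁]; simp [hadef, hbdef, hk]
      · rw [moveFn_apply₂ hne12]; simp [hadef, hbdef, hk]
    refine key (moveFn xstar i₁ i₂ a b) hsch' ?_ ?_ ?_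
    · intro i
      have h3 := hCle i₂
      by_cases h1 : i = i₁
      · rw [h1]; omega
      by_cases h2 : i = i₂
      · rw [h2]; omega
      · rw [moveFn_load_other p h1 h2]; exact hCle i
    · unfold Phi
      rw [sum_split (fun i => load p (moveFn xstar i₁ i₂ a b) i ^ 2) hne12,
          sum_split (fun i => load p xstar i ^ 2) hne12]
      have hrest : ∑ i ∈ (Finset.univ.erase i₁).erase i₂,
            load p (moveFn xstar i₁ i₂ a b) i ^ 2
          = ∑ i ∈ (Finset.univ.erase i₁).erase i₂, load p xstar i ^ 2 := by
        refine Finset.sum_congr rfl fun i hi => ?_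
        have hi2 := Finset.mem_erase.mp hi
        have hi1 := Finset.mem_erase.mp hi2.2
        rw [moveFn_load_other p hi1.1 hi2.1]
      have hpair := arithA he1 he2 hA
      omega
    · unfold Psi
      rw [sum_split (fun i => ∑ k, (moveFn xstar i₁ i₂ a b) i k ^ 2) hne12,
          sum_split (fun i => ∑ k, xstar i k ^ 2) hne12]
      have hrest : ∑ i ∈ (Finset.univ.erase i₁).erase i₂,
            ∑ k, (moveFn xstar i₁ i₂ a b) i k ^ 2
          = ∑ i ∈ (Finset.univ.erase i₁).erase i₂, ∑ k, xstar i k ^ 2 := by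
        refine Finset.sum_congr rfl fun i hi => ?_
        have hi2 := Finset.mem_erase.mp hi
        have hi1 := Finset.mem_erase.mp hi2.2
        rw [moveFn_apply_other hi1.1 hi2.1]
      have hj : (moveFn xstar i₁ i₂ a b) i₁ j ^ 2 + (moveFn xstar i₁ i₂ a b) i₂ j ^ 2
          < xstar i₁ j ^ 2 + xstar i₂ j ^ 2 := by
        rw [hv1, hv2]
        exact arithB 1 le_rfl (by omega)
      have hpair : (∑ k, (moveFn xstar i₁ i₂ a b) i₁ k ^ 2)
            + ∑ k, (moveFn xstar i₁ i₂ a b) i₂ k ^ 2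
          < (∑ k, xstar i₁ k ^ 2) + ∑ k, xstar i₂ k ^ 2 := by
        rw [← Finset.sum_add_distrib, ← Finset.sum_add_distrib]
        refine Finset.sum_lt_sum (fun k _ => ?_) ⟨j, Finset.mem_univ j, hj⟩
        by_cases hk : k = j
        · rw [hk]; exact le_of_lt hj
        · rw [(hvo k hk).1, (hvo k hk).2]
      omega
  · -- Case B: load-preserving exchange of q type-j jobs against a bundle from i₂
    set nv : Fin d → ℕ := fun k => if k = j then 0 else xstar i₂ k - xstar i₁ k with hnvdef
    have hnvsum : pmax * p j + 1 ≤ ∑ k, nv k * p k := by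
      have hld₂ : load p xstar i₂ = ∑ k, xstar i₂ k * p k := rfl
      have hld₁ : load p xstar i₁ = ∑ k, xstar i₁ k * p k := rfl
      have hsplit₂ : xstar i₂ j * p j + ∑ k ∈ Finset.univ.erase j, xstar i₂ k * p k
          = ∑ k, xstar i₂ k * p k :=
        Finset.add_sum_erase _ (fun k => xstar i₂ k * p k) (Finset.mem_univ j)
      have hsplit₁ : xstar i₁ j * p j + ∑ k ∈ Finset.univ.erase j, xstar i₁ k * p k
          = ∑ k, xstar i₁ k * p k :=
        Finset.add_sum_erase _ (fun k => xstar i₁ k * p k) (Finset.mem_univ j)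
      have hS : ∑ k ∈ Finset.univ.erase j, xstar i₂ k * p k
          ≤ (∑ k ∈ Finset.univ.erase j, nv k * p k)
            + ∑ k ∈ Finset.univ.erase j, xstar i₁ k * p k := by
        rw [← Finset.sum_add_distrib]
        refine Finset.sum_le_sum fun k hk => ?_
        have hkj : k ≠ j := (Finset.mem_erase.mp hk).1
        simp only [hnvdef, if_neg hkj]
        rw [← add_mul]
        exact Nat.mul_le_mul_right _ (by omega)
      have hsub : ∑ k ∈ Finset.univ.erase j, nv k * p k ≤ ∑ k, nv k * p k :=
        Finset.sum_le_sum_of_subset (Finset.subset_univ _)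
      have hz' : xstar i₂ j * p j + pmax * p j + p j ≤ xstar i₁ j * p j := by
        have h := Nat.mul_le_mul_right (p j)
          (show xstar i₂ j + pmax + 1 ≤ xstar i₁ j by omega)
        rw [add_mul, add_mul, one_mul] at h
        exact h
      omega
    obtain ⟨t, q, ht, hq1, hq2, htp⟩ := exchange p nv pmax (p j) hp hppm hpj1 hnvsum
    set a : Fin d → ℕ := fun k => if k = j then q else 0 with hadef
    have ha : ∀ k, a k ≤ xstar i₁ k := by
      intro k
      by_cases hk : k = j
      · simp only [hadef, hk, if_pos rfl]; omega
      · simp only [hadef, if_neg hk]; omega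
    have hb : ∀ k, t k ≤ xstar i₂ k := by
      intro k
      have h1 := ht k
      by_cases hk : k = j
      · rw [hk] at h1 ⊢
        simp only [hnvdef, if_pos rfl] at h1
        omega
      · simp only [hnvdef, if_neg hk] at h1
        omega
    have htj : t j = 0 := by
      have h1 := ht j
      simp only [hnvdef, if_pos rfl] at h1
      omega
    have hap : ∑ k, a k * p k = q * p j := by
      have h0 : ∀ k, a k * p k = if k = j then q * p k else 0 := by
        intro k; by_cases hk : k = j <;> simp [hadef, hk]
      rw [Finset.sum_congr rfl fun k _ => h0 k,
          Finset.sum_ite_eq' Finset.univ j (fun k => q * p k)]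
      simp
    have hsch' := moveFn_isSchedule hne12 ha hb hs
    have he1 := moveFn_load₁ (i₂ := i₂) (b := t) p ha
    have he2 := moveFn_load₂ (a := a) p hne12 hb
    rw [hap, htp] at he1 he2
    have hl1 : load p (moveFn xstar i₁ i₂ a t) i₁ = load p xstar i₁ := by omega
    have hl2 : load p (moveFn xstar i₁ i₂ a t) i₂ = load p xstar i₂ := by omega
    have hv1 : moveFn xstar i₁ i₂ a t i₁ j = xstar i₁ j - q := by
      rw [moveFn_apply₁]; simp [hadef, htj]
    have hv2 : moveFn xstar i₁ i₂ a t i₂ j = xstar i₂ j + q := by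
      rw [moveFn_apply₂ hne12]; simp [hadef, htj]
    have hvo : ∀ k, k ≠ j → moveFn xstar i₁ i₂ a t i₁ k = xstar i₁ k + t k
        ∧ moveFn xstar i₁ i₂ a t i₂ k = xstar i₂ k - t k := by
      intro k hk
      constructor
      · rw [moveFn_apply₁]; simp [hadef, hk]
      · rw [moveFn_apply₂ hne12]; simp [hadef, hk]
    refine key (moveFn xstar i₁ i₂ a t) hsch' ?_ ?_ ?_
    · intro i
      by_cases h1 : i = i₁
      · rw [h1, hl1]; exact hCle i₁
      by_cases h2 : i = i₂
      · rw [h2, hl2]; exact hCle i₂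
      · rw [moveFn_load_other p h1 h2]; exact hCle i
    · refine le_of_eq ?_
      unfold Phi
      refine Finset.sum_congr rfl fun i _ => ?_
      by_cases h1 : i = i₁
      · rw [h1, hl1]
      by_cases h2 : i = i₂
      · rw [h2, hl2]
      · rw [moveFn_load_other p h1 h2]
    · unfold Psi
      rw [sum_split (fun i => ∑ k, (moveFn xstar i₁ i₂ a t) i k ^ 2) hne12,
          sum_split (fun i => ∑ k, xstar i k ^ 2) hne12]
      have hrest : ∑ i ∈ (Finset.univ.erase i₁).erase i₂,
            ∑ k, (moveFn xstar i₁ i₂ a t) i k ^ 2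
          = ∑ i ∈ (Finset.univ.erase i₁).erase i₂, ∑ k, xstar i k ^ 2 := by
        refine Finset.sum_congr rfl fun i hi => ?_
        have hi2 := Finset.mem_erase.mp hi
        have hi1 := Finset.mem_erase.mp hi2.2
        rw [moveFn_apply_other hi1.1 hi2.1]
      have hj2 : (moveFn xstar i₁ i₂ a t) i₁ j ^ 2 + (moveFn xstar i₁ i₂ a t) i₂ j ^ 2
          < xstar i₁ j ^ 2 + xstar i₂ j ^ 2 := by
        rw [hv1, hv2]
        exact arithB q hq1 (by omega)
      have hpair : (∑ k, (moveFn xstar i₁ i₂ a t) i₁ k ^ 2)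
            + ∑ k, (moveFn xstar i₁ i₂ a t) i₂ k ^ 2
          < (∑ k, xstar i₁ k ^ 2) + ∑ k, xstar i₂ k ^ 2 := by
        rw [← Finset.sum_add_distrib, ← Finset.sum_add_distrib]
        refine Finset.sum_lt_sum (fun k _ => ?_) ⟨j, Finset.mem_univ j, hj2⟩
        by_cases hk : k = j
        · rw [hk]; exact le_of_lt hj2
        · rw [(hvo k hk).1, (hvo k hk).2]
          have h1 := ht k
          simp only [hnvdef, if_neg hk] at h1
          exact arithC h1
      omega
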